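/- Let X, Y be Polish spaces, μ, ν probability measures, P = μ ⊗ ν, and let R ∼ P. If π, π' ∈ Π(μ,ν) both have everywhere-positive densities with respect to R admitting factorizations dπ/dR(x,y) = φ(x)ψ(y) and dπ'/dR(x,y) = φ'(x)ψ'(y) with positive Borel factors, then π = π'. That is, there is at most one coupling π ∈ Π(μ,ν) such that (π, R) is cyclically invariant. -/

import Mathlib

open MeasureTheory Set ENNReal Filter

noncomputable def trunc (n : ℝ) (t : ℝ) : ℝ := max (min t n) (-n)

lemma trunc_neg (n a : ℝ) (hn : 0 ≤ n) : trunc n (-a) = - trunc n a := by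
  simp only [trunc, min_def, max_def]
  split_ifs <;> linarith

lemma trunc_mono (n : ℝ) : Monotone (trunc n) := fun a b h => by
  exact max_le_max (min_le_min h le_rfl) le_rfl

lemma trunc_abs_le (n a : ℝ) (hn : 0 ≤ n) : |trunc n a| ≤ n := by
  rw [abs_le]
  constructor
  · exact le_max_right _ _
  · exact max_le (min_le_right _ _) (by linarith)

lemma trunc_eq_self (n a : ℝ) (h : |a| ≤ n) : trunc n a = a := by
  rw [abs_le] at h
  simp only [trunc, min_eq_left h.2, max_eq_left h.1]

lemma trunc_add_nonneg (n a b : ℝ) (h : 0 ≤ a + b) : 0 ≤ trunc n a + trunc n b := by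
  have h1 : trunc n (-b) ≤ trunc n a := trunc_mono n (by linarith)
  simp only [trunc, min_def, max_def] at *
  split_ifs at * <;> linarith

lemma trunc_add_le (n a b : ℝ) (hn : 0 ≤ n) (h : 0 ≤ a + b) : trunc n a + trunc n b ≤ a + b := by
  rcases lt_or_ge a (-n) with ha | ha
  · have hb : n < b := by linarith
    have h1 : trunc n a = -n := by
      simp only [trunc, min_eq_left (by linarith : a ≤ n), max_eq_right (by linarith : a ≤ -n)]
    have h2 : trunc n b = n := by
      simp only [trunc, min_eq_right hb.le, max_eq_left (by linarith : -n ≤ n)]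
    rw [h1, h2]; linarith
  · rcases lt_or_ge b (-n) with hb | hb
    · have ha2 : n < a := by linarith
      have h1 : trunc n b = -n := by
        simp only [trunc, min_eq_left (by linarith : b ≤ n), max_eq_right (by linarith : b ≤ -n)]
      have h2 : trunc n a = n := by
        simp only [trunc, min_eq_right ha2.le, max_eq_left (by linarith : -n ≤ n)]
      rw [h1, h2]; linarith
    · have h1 : trunc n a ≤ a := by
        simp only [trunc]
        rw [max_eq_left (le_min ha (by linarith))]
        exact min_le_left _ _
      have h2 : trunc n b ≤ b := by
        simp only [trunc]
        rw [max_eq_left (le_min hb (by linarith))]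
        exact min_le_left _ _
      linarith

lemma trunc_add_nonpos (n a b : ℝ) (hn : 0 ≤ n) (h : a + b ≤ 0) :
    a + b ≤ trunc n a + trunc n b ∧ trunc n a + trunc n b ≤ 0 := by
  have h1 := trunc_add_nonneg n (-a) (-b) (by linarith)
  have h2 := trunc_add_le n (-a) (-b) hn (by linarith)
  rw [trunc_neg n a hn, trunc_neg n b hn] at *
  constructor <;> linarith

lemma continuous_trunc (n : ℝ) : Continuous (trunc n) :=
  (continuous_id.min continuous_const).max continuous_const

lemma integrable_of_bdd {Z : Type*} [MeasurableSpace Z] {κ : Measure Z} [IsFiniteMeasure κ]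
    {f : Z → ℝ} (hf : AEStronglyMeasurable f κ) {C : ℝ} (hC : ∀ z, |f z| ≤ C) :
    Integrable f κ :=
  (integrable_const C).mono' hf (Filter.Eventually.of_forall hC)

lemma integral_sum_marginals {X Y : Type*} [MeasurableSpace X] [MeasurableSpace Y]
    (κ : Measure (X × Y)) [IsProbabilityMeasure κ]
    (A : X → ℝ) (B : Y → ℝ) (hA : Measurable A) (hB : Measurable B)
    (CA CB : ℝ) (hCA : ∀ x, |A x| ≤ CA) (hCB : ∀ y, |B y| ≤ CB) :
    ∫ z, (A z.1 + B z.2) ∂κ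
      = ∫ x, A x ∂(κ.map Prod.fst) + ∫ y, B y ∂(κ.map Prod.snd) := by
  have hA1 : Integrable (fun z : X × Y => A z.1) κ :=
    integrable_of_bdd ((hA.comp measurable_fst).aestronglyMeasurable) (fun z => hCA z.1)
  have hB1 : Integrable (fun z : X × Y => B z.2) κ :=
    integrable_of_bdd ((hB.comp measurable_snd).aestronglyMeasurable) (fun z => hCB z.2)
  rw [integral_add hA1 hB1,
    integral_map measurable_fst.aemeasurable hA.aestronglyMeasurable,
    integral_map measurable_snd.aemeasurable hB.aestronglyMeasurable]

theorem aux_unique {Z : Type*} [MeasurableSpace Z] (π π' : Measure Z)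
    [IsProbabilityMeasure π] [IsProbabilityMeasure π']
    (ρ : Z → ℝ) (hρm : Measurable ρ) (hρpos : ∀ z, 0 < ρ z)
    (hπ : π = π'.withDensity (fun z => ENNReal.ofReal (ρ z)))
    (G : ℕ → Z → ℝ) (hGm : ∀ n, Measurable (G n))
    (hGb : ∀ n, ∃ C, ∀ z, |G n z| ≤ C)
    (hdom : ∀ n z, (0 ≤ Real.log (ρ z) → G n z ∈ Icc (0:ℝ) (Real.log (ρ z))) ∧
                   (Real.log (ρ z) ≤ 0 → G n z ∈ Icc (Real.log (ρ z)) (0:ℝ)))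
    (hconv : ∀ z, ∀ᶠ n in atTop, G n z = Real.log (ρ z))
    (hint : ∀ n, ∫ z, G n z ∂π = ∫ z, G n z ∂π') : π = π' := by
  set r : Z → ℝ≥0∞ := fun z => ENNReal.ofReal (ρ z) with hr
  have hrm : Measurable r := ENNReal.measurable_ofReal.comp hρm
  have hrtop : ∀ z, r z ≠ ⊤ := fun z => ENNReal.ofReal_ne_top
  have hr0 : ∀ z, r z ≠ 0 := fun z => by
    simp [hr, ENNReal.ofReal_eq_zero, not_le, hρpos z]
  -- π' as withDensity over π
  have hπ'd : π' = π.withDensity (fun z => ENNReal.ofReal (ρ z)⁻¹) := by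
    have h1 : (fun z => ENNReal.ofReal (ρ z)⁻¹) = fun z => (r z)⁻¹ := by
      funext z; rw [hr]; exact ENNReal.ofReal_inv_of_pos (hρpos z)
    rw [h1, hπ, withDensity_inv_same₀ hrm.aemeasurable
      (Filter.Eventually.of_forall hr0) (Filter.Eventually.of_forall hrtop)]
  -- basic integral identities
  have key1 : ∫⁻ z, r z ∂π' = 1 := by
    have : π Set.univ = 1 := measure_univ
    rwa [hπ, withDensity_apply _ MeasurableSet.univ, setLIntegral_univ] at this
  have hIntρ : Integrable ρ π' := by
    have h := integrable_toReal_of_lintegral_ne_top hrm.aemeasurable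
      (by rw [key1]; exact one_ne_top)
    have : (fun z => (r z).toReal) = ρ := by
      funext z; exact ENNReal.toReal_ofReal (hρpos z).le
    rwa [this] at h
  have hIρ : ∫ z, ρ z ∂π' = 1 := by
    have h := integral_toReal (μ := π') hrm.aemeasurable
      (Filter.Eventually.of_forall fun z => lt_top_iff_ne_top.2 (hrtop z))
    have h2 : (fun z => (r z).toReal) = ρ := by
      funext z; exact ENNReal.toReal_ofReal (hρpos z).le
    rw [h2] at h
    rw [h, key1]; simp
  -- inverse density
  set ρi : Z → ℝ := fun z => (ρ z)⁻¹ with hρi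
  have hρim : Measurable ρi := hρm.inv
  have hρipos : ∀ z, 0 < ρi z := fun z => inv_pos.2 (hρpos z)
  have key2 : ∫⁻ z, ENNReal.ofReal (ρi z) ∂π = 1 := by
    have : π' Set.univ = 1 := measure_univ
    rwa [hπ'd, withDensity_apply _ MeasurableSet.univ, setLIntegral_univ] at this
  have hIntρi : Integrable ρi π := by
    have h := integrable_toReal_of_lintegral_ne_top
      (hρim.ennreal_ofReal.aemeasurable) (by rw [key2]; exact one_ne_top)
    have : (fun z => (ENNReal.ofReal (ρi z)).toReal) = ρi := by
      funext z; exact ENNReal.toReal_ofReal (hρipos z).le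
    rwa [this] at h
  have hIρi : ∫ z, ρi z ∂π = 1 := by
    have h := integral_toReal (μ := π) (hρim.ennreal_ofReal.aemeasurable)
      (Filter.Eventually.of_forall fun z => lt_top_iff_ne_top.2 ENNReal.ofReal_ne_top)
    have h2 : (fun z => (ENNReal.ofReal (ρi z)).toReal) = ρi := by
      funext z; exact ENNReal.toReal_ofReal (hρipos z).le
    rw [h2] at h
    rw [h, key2]; simp
  -- the log density
  set F : Z → ℝ := fun z => Real.log (ρ z) with hF
  have hFm : Measurable F := Real.measurable_log.comp hρm
  have hFle : ∀ z, F z ≤ ρ z - 1 := fun z => Real.log_le_sub_one_of_pos (hρpos z)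
  have hFge : ∀ z, 1 - ρi z ≤ F z := by
    intro z
    have := Real.log_le_sub_one_of_pos (hρipos z)
    rw [hρi] at this
    rw [Real.log_inv] at this
    simp only [hF]
    linarith
  -- positive and negative parts
  have hFposInt : Integrable (fun z => max (F z) 0) π' := by
    refine hIntρ.mono' ((hFm.max measurable_const).aestronglyMeasurable)
      (Filter.Eventually.of_forall fun z => ?_)
    rw [Real.norm_eq_abs, abs_of_nonneg (le_max_right _ _)]
    exact max_le (by linarith [hFle z, hρpos z]) (hρpos z).le
  have hFnegInt : Integrable (fun z => max (-F z) 0) π := by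
    refine hIntρi.mono' (((hFm.neg).max measurable_const).aestronglyMeasurable)
      (Filter.Eventually.of_forall fun z => ?_)
    rw [Real.norm_eq_abs, abs_of_nonneg (le_max_right _ _)]
    exact max_le (by linarith [hFge z, hρipos z]) (hρipos z).le
  -- pointwise bounds on G
  have hGabs : ∀ n z, |G n z| ≤ |F z| := by
    intro n z
    rcases le_total 0 (F z) with h | h
    · have := (hdom n z).1 h
      rw [abs_of_nonneg this.1, abs_of_nonneg h]; exact this.2
    · have := (hdom n z).2 h
      rw [abs_of_nonpos this.2, abs_of_nonpos h]; linarith [this.1]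
  have hGpos_le : ∀ n z, max (G n z) 0 ≤ max (F z) 0 := by
    intro n z
    rcases le_total 0 (F z) with h | h
    · have := (hdom n z).1 h
      exact max_le (le_max_of_le_left this.2) (le_max_right _ _)
    · have := (hdom n z).2 h
      exact max_le (le_max_of_le_right this.2) (le_max_right _ _)
  have hGneg_le : ∀ n z, max (-G n z) 0 ≤ max (-F z) 0 := by
    intro n z
    rcases le_total 0 (F z) with h | h
    · have := (hdom n z).1 h
      exact max_le (le_max_of_le_right (by linarith [this.1])) (le_max_right _ _)
    · have := (hdom n z).2 h
      exact max_le (le_max_of_le_left (by linarith [this.1])) (le_max_right _ _)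
  have hGge : ∀ n z, -(max (-F z) 0) ≤ G n z := by
    intro n z
    rcases le_total 0 (F z) with h | h
    · have := (hdom n z).1 h
      linarith [this.1, le_max_right (-F z) 0]
    · have := (hdom n z).2 h
      have h2 : max (-F z) 0 = -F z := max_eq_left (by linarith)
      rw [h2]; simpa using this.1
  -- integrability of each G n
  have hGint : ∀ n (κ : Measure Z) [IsProbabilityMeasure κ], Integrable (G n) κ := by
    intro n κ _
    obtain ⟨C, hC⟩ := hGb n
    exact (integrable_const C).mono' (hGm n).aestronglyMeasurable
      (Filter.Eventually.of_forall fun z => hC z)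
  -- lower bound for the common integral sequence
  set C : ℝ := ∫ z, max (-F z) 0 ∂π with hC
  have hC0 : 0 ≤ C := integral_nonneg fun z => le_max_right _ _
  set C' : ℝ := ∫ z, max (F z) 0 ∂π' with hC'
  have hC'0 : 0 ≤ C' := integral_nonneg fun z => le_max_right _ _
  have hlow : ∀ n, -C ≤ ∫ z, G n z ∂π' := by
    intro n
    rw [← hint n, hC, ← integral_neg]
    exact integral_mono hFnegInt.neg (hGint n π) (fun z => hGge n z)
  -- splitting of integrals into positive and negative parts
  have hsplit : ∀ n (κ : Measure Z) [IsProbabilityMeasure κ],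
      ∫ z, G n z ∂κ = (∫ z, max (G n z) 0 ∂κ) - ∫ z, max (-G n z) 0 ∂κ := by
    intro n κ _
    obtain ⟨B, hB⟩ := hGb n
    have h1 : Integrable (fun z => max (G n z) 0) κ := by
      refine integrable_of_bdd (((hGm n).max measurable_const).aestronglyMeasurable)
        (C := B) fun z => ?_
      rw [abs_of_nonneg (le_max_right _ _)]
      exact max_le ((le_abs_self _).trans (hB z)) ((abs_nonneg _).trans (hB z))
    have h2 : Integrable (fun z => max (-G n z) 0) κ := by
      refine integrable_of_bdd (((hGm n).neg.max measurable_const).aestronglyMeasurable)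
        (C := B) fun z => ?_
      rw [abs_of_nonneg (le_max_right _ _)]
      exact max_le ((neg_le_abs _).trans (hB z)) ((abs_nonneg _).trans (hB z))
    calc ∫ z, G n z ∂κ = ∫ z, (max (G n z) 0 - max (-G n z) 0) ∂κ :=
          integral_congr_ae (Filter.Eventually.of_forall
            fun z => (max_zero_sub_eq_self (G n z)).symm)
      _ = (∫ z, max (G n z) 0 ∂κ) - ∫ z, max (-G n z) 0 ∂κ := integral_sub h1 h2
  have hGposInt : ∀ n (κ : Measure Z) [IsProbabilityMeasure κ],
      Integrable (fun z => max (G n z) 0) κ := by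
    intro n κ _
    obtain ⟨B, hB⟩ := hGb n
    refine integrable_of_bdd (((hGm n).max measurable_const).aestronglyMeasurable)
      (C := B) fun z => ?_
    rw [abs_of_nonneg (le_max_right _ _)]
    exact max_le ((le_abs_self _).trans (hB z)) ((abs_nonneg _).trans (hB z))
  have hGnegInt : ∀ n (κ : Measure Z) [IsProbabilityMeasure κ],
      Integrable (fun z => max (-G n z) 0) κ := by
    intro n κ _
    obtain ⟨B, hB⟩ := hGb n
    refine integrable_of_bdd (((hGm n).neg.max measurable_const).aestronglyMeasurable)
      (C := B) fun z => ?_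
    rw [abs_of_nonneg (le_max_right _ _)]
    exact max_le ((neg_le_abs _).trans (hB z)) ((abs_nonneg _).trans (hB z))
  -- Step I : the negative part of F is π'-integrable
  have hFnegInt' : Integrable (fun z => max (-F z) 0) π' := by
    by_contra hni
    have htop : ∫⁻ z, ENNReal.ofReal (max (-F z) 0) ∂π' = ⊤ := by
      by_contra h
      exact hni ((lintegral_ofReal_ne_top_iff_integrable
        ((hFm.neg.max measurable_const).aestronglyMeasurable)
        (Filter.Eventually.of_forall fun z => le_max_right _ _)).1 h)
    have hfat : liminf (fun n => ∫⁻ z, ENNReal.ofReal (max (-G n z) 0) ∂π') atTop = ⊤ := by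
      rw [eq_top_iff]
      calc (⊤ : ℝ≥0∞) = ∫⁻ z, ENNReal.ofReal (max (-F z) 0) ∂π' := htop.symm
        _ = ∫⁻ z, liminf (fun n => ENNReal.ofReal (max (-G n z) 0)) atTop ∂π' := by
            apply lintegral_congr
            intro z
            have hev : ∀ᶠ n in atTop,
                ENNReal.ofReal (max (-G n z) 0) = ENNReal.ofReal (max (-F z) 0) :=
              (hconv z).mono fun n hn => by rw [hn]
            exact ((tendsto_const_nhds.congr' (hev.mono fun n hn => hn.symm)).liminf_eq).symm
        _ ≤ liminf (fun n => ∫⁻ z, ENNReal.ofReal (max (-G n z) 0) ∂π') atTop :=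
            lintegral_liminf_le fun n => ((hGm n).neg.max measurable_const).ennreal_ofReal
    have hev : ∀ᶠ n in atTop,
        ENNReal.ofReal (C' + C + 1) < ∫⁻ z, ENNReal.ofReal (max (-G n z) 0) ∂π' :=
      Filter.eventually_lt_of_lt_liminf (by rw [hfat]; exact ENNReal.ofReal_lt_top)
    obtain ⟨n, hn⟩ := hev.exists
    obtain ⟨B, hB⟩ := hGb n
    have hfin : ∫⁻ z, ENNReal.ofReal (max (-G n z) 0) ∂π' ≠ ⊤ := by
      have hle : ∫⁻ z, ENNReal.ofReal (max (-G n z) 0) ∂π' ≤ ENNReal.ofReal B := by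
        calc ∫⁻ z, ENNReal.ofReal (max (-G n z) 0) ∂π'
            ≤ ∫⁻ _, ENNReal.ofReal B ∂π' := by
              apply lintegral_mono
              intro z
              exact ENNReal.ofReal_le_ofReal
                (max_le ((neg_le_abs _).trans (hB z)) ((abs_nonneg _).trans (hB z)))
          _ = ENNReal.ofReal B := by simp
      exact ne_top_of_le_ne_top ENNReal.ofReal_ne_top hle
    have hQ : ∫ z, max (-G n z) 0 ∂π'
        = (∫⁻ z, ENNReal.ofReal (max (-G n z) 0) ∂π').toReal :=
      integral_eq_lintegral_of_nonneg_ae (μ := π') (f := fun z => max (-G n z) 0)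
        (Filter.Eventually.of_forall fun z => le_max_right _ _)
        ((hGm n).neg.max measurable_const).aestronglyMeasurable
    have hQbig : C' + C + 1 < ∫ z, max (-G n z) 0 ∂π' := by
      rw [hQ]
      exact (ENNReal.ofReal_lt_iff_lt_toReal (by linarith) hfin).1 hn
    have hPle : ∫ z, max (G n z) 0 ∂π' ≤ C' :=
      integral_mono (hGposInt n π') hFposInt (fun z => hGpos_le n z)
    have := hlow n
    rw [hsplit n π'] at this
    linarith
  have hFInt' : Integrable F π' :=
    (hFposInt.sub hFnegInt').congr
      (Filter.Eventually.of_forall fun z => max_zero_sub_eq_self (F z))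
  -- Step II : convergence of the common sequence to ∫ F dπ'
  have hTend' : Tendsto (fun n => ∫ z, G n z ∂π') atTop (nhds (∫ z, F z ∂π')) := by
    refine tendsto_integral_of_dominated_convergence (fun z => |F z|)
      (fun n => (hGm n).aestronglyMeasurable) hFInt'.abs
      (fun n => Filter.Eventually.of_forall fun z => by
        rw [Real.norm_eq_abs]; exact hGabs n z)
      (Filter.Eventually.of_forall fun z => ?_)
    exact tendsto_const_nhds.congr' ((hconv z).mono fun n hn => hn.symm)
  have hρsubInt : Integrable (fun z => ρ z - 1) π' :=
    (hIntρ.sub (integrable_const 1)).congr (Filter.Eventually.of_forall fun z => rfl)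
  have hρsubI : ∫ z, (ρ z - 1) ∂π' = 0 := by
    rw [integral_sub hIntρ (integrable_const 1), hIρ, integral_const, probReal_univ,
      one_smul, sub_self]
  have hFle0 : ∫ z, F z ∂π' ≤ 0 := by
    have h := integral_mono hFInt' hρsubInt (fun z => hFle z)
    rwa [hρsubI] at h
  -- Step III : the positive part of F is π-integrable
  have hFposIntπ : Integrable (fun z => max (F z) 0) π := by
    by_contra hni
    have htop : ∫⁻ z, ENNReal.ofReal (max (F z) 0) ∂π = ⊤ := by
      by_contra h
      exact hni ((lintegral_ofReal_ne_top_iff_integrable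
        ((hFm.max measurable_const).aestronglyMeasurable)
        (Filter.Eventually.of_forall fun z => le_max_right _ _)).1 h)
    have hfat : liminf (fun n => ∫⁻ z, ENNReal.ofReal (max (G n z) 0) ∂π) atTop = ⊤ := by
      rw [eq_top_iff]
      calc (⊤ : ℝ≥0∞) = ∫⁻ z, ENNReal.ofReal (max (F z) 0) ∂π := htop.symm
        _ = ∫⁻ z, liminf (fun n => ENNReal.ofReal (max (G n z) 0)) atTop ∂π := by
            apply lintegral_congr
            intro z
            have hev : ∀ᶠ n in atTop,
                ENNReal.ofReal (max (G n z) 0) = ENNReal.ofReal (max (F z) 0) :=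
              (hconv z).mono fun n hn => by rw [hn]
            exact ((tendsto_const_nhds.congr' (hev.mono fun n hn => hn.symm)).liminf_eq).symm
        _ ≤ liminf (fun n => ∫⁻ z, ENNReal.ofReal (max (G n z) 0) ∂π) atTop :=
            lintegral_liminf_le fun n => ((hGm n).max measurable_const).ennreal_ofReal
    set L : ℝ := ∫ z, F z ∂π' with hL
    have hev : ∀ᶠ n in atTop,
        ENNReal.ofReal (|L| + C + 1) < ∫⁻ z, ENNReal.ofReal (max (G n z) 0) ∂π :=
      Filter.eventually_lt_of_lt_liminf (by rw [hfat]; exact ENNReal.ofReal_lt_top)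
    have hev2 : ∀ᶠ n in atTop, ∫ z, G n z ∂π' < L + 1 :=
      hTend'.eventually (Filter.Tendsto.eventually_lt_const (by linarith) tendsto_id)
    obtain ⟨n, hn1, hn2⟩ := (hev.and hev2).exists
    obtain ⟨B, hB⟩ := hGb n
    have hfin : ∫⁻ z, ENNReal.ofReal (max (G n z) 0) ∂π ≠ ⊤ := by
      have hle : ∫⁻ z, ENNReal.ofReal (max (G n z) 0) ∂π ≤ ENNReal.ofReal B := by
        calc ∫⁻ z, ENNReal.ofReal (max (G n z) 0) ∂π
            ≤ ∫⁻ _, ENNReal.ofReal B ∂π := by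
              apply lintegral_mono
              intro z
              exact ENNReal.ofReal_le_ofReal
                (max_le ((le_abs_self _).trans (hB z)) ((abs_nonneg _).trans (hB z)))
          _ = ENNReal.ofReal B := by simp
      exact ne_top_of_le_ne_top ENNReal.ofReal_ne_top hle
    have hP : ∫ z, max (G n z) 0 ∂π
        = (∫⁻ z, ENNReal.ofReal (max (G n z) 0) ∂π).toReal :=
      integral_eq_lintegral_of_nonneg_ae (μ := π) (f := fun z => max (G n z) 0)
        (Filter.Eventually.of_forall fun z => le_max_right _ _)
        ((hGm n).max measurable_const).aestronglyMeasurable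
    have hPbig : |L| + C + 1 < ∫ z, max (G n z) 0 ∂π := by
      rw [hP]
      exact (ENNReal.ofReal_lt_iff_lt_toReal (by positivity) hfin).1 hn1
    have hQle : ∫ z, max (-G n z) 0 ∂π ≤ C :=
      integral_mono (hGnegInt n π) hFnegInt (fun z => hGneg_le n z)
    have h1 := hint n
    rw [hsplit n π] at h1
    have habs : L ≤ |L| := le_abs_self L
    linarith
  have hFIntπ : Integrable F π :=
    (hFposIntπ.sub hFnegInt).congr
      (Filter.Eventually.of_forall fun z => max_zero_sub_eq_self (F z))
  have hTend : Tendsto (fun n => ∫ z, G n z ∂π') atTop (nhds (∫ z, F z ∂π)) := by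
    have h : Tendsto (fun n => ∫ z, G n z ∂π) atTop (nhds (∫ z, F z ∂π)) := by
      refine tendsto_integral_of_dominated_convergence (fun z => |F z|)
        (fun n => (hGm n).aestronglyMeasurable) hFIntπ.abs
        (fun n => Filter.Eventually.of_forall fun z => by
          rw [Real.norm_eq_abs]; exact hGabs n z)
        (Filter.Eventually.of_forall fun z => ?_)
      exact tendsto_const_nhds.congr' ((hconv z).mono fun n hn => hn.symm)
    exact h.congr fun n => hint n
  have hFge0 : 0 ≤ ∫ z, F z ∂π := by
    have hsubInt : Integrable (fun z => 1 - ρi z) π :=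
      ((integrable_const 1).sub hIntρi).congr (Filter.Eventually.of_forall fun z => rfl)
    have hsubI : ∫ z, (1 - ρi z) ∂π = 0 := by
      rw [integral_sub (integrable_const 1) hIntρi, hIρi, integral_const, probReal_univ,
        one_smul, sub_self]
    have h := integral_mono hsubInt hFIntπ (fun z => hFge z)
    rwa [hsubI] at h
  have hEq : ∫ z, F z ∂π = ∫ z, F z ∂π' := tendsto_nhds_unique hTend hTend'
  have hF0 : ∫ z, F z ∂π' = 0 := le_antisymm hFle0 (hEq ▸ hFge0)
  -- Step IV : equality case of the logarithmic inequality
  have hintsub : Integrable (fun z => ρ z - 1 - F z) π' :=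
    (hρsubInt.sub hFInt').congr (Filter.Eventually.of_forall fun z => rfl)
  have h0 : ∫ z, (ρ z - 1 - F z) ∂π' = 0 := by
    rw [integral_sub hρsubInt hFInt', hρsubI, hF0, sub_self]
  have hae : (fun z => ρ z - 1 - F z) =ᵐ[π'] 0 :=
    (integral_eq_zero_iff_of_nonneg_ae
      (Filter.Eventually.of_forall fun z => by simp only [Pi.zero_apply]; linarith [hFle z])
      hintsub).1 h0
  have hρ1 : ∀ᵐ z ∂π', ρ z = 1 := by
    filter_upwards [hae] with z hz
    by_contra hne
    have hlt := Real.log_lt_sub_one_of_pos (hρpos z) hne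
    simp only [Pi.zero_apply] at hz
    have hFz : F z = Real.log (ρ z) := rfl
    rw [hFz] at hz
    linarith
  have hone : (fun z => ENNReal.ofReal (ρ z)) =ᵐ[π'] (fun _ => 1) := by
    filter_upwards [hρ1] with z hz
    rw [hz]; simp
  rw [hπ, hr, withDensity_congr_ae hone]
  exact withDensity_one

/-- Uniqueness of cyclically invariant couplings: if two couplings π, π' ∈ Π(μ, ν) both
have densities with respect to R ∼ P := μ ⊗ ν that factor as positive products
φ(x)ψ(y) and φ'(x)ψ'(y), then π = π'. -/
theorem cyclically_invariant_coupling_unique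
    {X Y : Type*} [MetricSpace X] [TopologicalSpace.SeparableSpace X] [CompleteSpace X]
    [MeasurableSpace X] [BorelSpace X]
    [MetricSpace Y] [TopologicalSpace.SeparableSpace Y] [CompleteSpace Y]
    [MeasurableSpace Y] [BorelSpace Y]
    (μ : Measure X) [IsProbabilityMeasure μ] (ν : Measure Y) [IsProbabilityMeasure ν]
    (R : Measure (X × Y)) [IsProbabilityMeasure R]
    (hRP : R ≪ μ.prod ν) (hPR : μ.prod ν ≪ R)
    (π π' : Measure (X × Y)) [IsProbabilityMeasure π] [IsProbabilityMeasure π']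
    (hπ₁ : π.map Prod.fst = μ) (hπ₂ : π.map Prod.snd = ν)
    (hπ'₁ : π'.map Prod.fst = μ) (hπ'₂ : π'.map Prod.snd = ν)
    (φ : X → ℝ≥0∞) (ψ : Y → ℝ≥0∞) (hφ : Measurable φ) (hψ : Measurable ψ)
    (hφpos : ∀ x, 0 < φ x ∧ φ x ≠ ⊤) (hψpos : ∀ y, 0 < ψ y ∧ ψ y ≠ ⊤)
    (hπR : π = R.withDensity fun z => φ z.1 * ψ z.2)
    (φ' : X → ℝ≥0∞) (ψ' : Y → ℝ≥0∞) (hφ' : Measurable φ') (hψ' : Measurable ψ')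
    (hφ'pos : ∀ x, 0 < φ' x ∧ φ' x ≠ ⊤) (hψ'pos : ∀ y, 0 < ψ' y ∧ ψ' y ≠ ⊤)
    (hπ'R : π' = R.withDensity fun z => φ' z.1 * ψ' z.2) :
    π = π' := by
  -- the real-valued ratio densities
  set u : X → ℝ≥0∞ := fun x => φ x / φ' x with hu
  set v : Y → ℝ≥0∞ := fun y => ψ y / ψ' y with hv
  have hu0 : ∀ x, u x ≠ 0 := fun x => by
    rw [hu]
    simp only [ne_eq, ENNReal.div_eq_zero_iff, not_or]
    exact ⟨(hφpos x).1.ne', (hφ'pos x).2⟩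
  have hutop : ∀ x, u x ≠ ⊤ := fun x => by
    rw [hu]
    simp only [ne_eq, ENNReal.div_eq_top, not_or, not_and_or]
    exact ⟨Or.inr (hφ'pos x).1.ne', Or.inl (hφpos x).2⟩
  have hv0 : ∀ y, v y ≠ 0 := fun y => by
    rw [hv]
    simp only [ne_eq, ENNReal.div_eq_zero_iff, not_or]
    exact ⟨(hψpos y).1.ne', (hψ'pos y).2⟩
  have hvtop : ∀ y, v y ≠ ⊤ := fun y => by
    rw [hv]
    simp only [ne_eq, ENNReal.div_eq_top, not_or, not_and_or]
    exact ⟨Or.inr (hψ'pos y).1.ne', Or.inl (hψpos y).2⟩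
  set U : X → ℝ := fun x => (u x).toReal with hU
  set V : Y → ℝ := fun y => (v y).toReal with hV
  have hUpos : ∀ x, 0 < U x := fun x => ENNReal.toReal_pos (hu0 x) (hutop x)
  have hVpos : ∀ y, 0 < V y := fun y => ENNReal.toReal_pos (hv0 y) (hvtop y)
  have hUm : Measurable U := (hφ.div hφ').ennreal_toReal
  have hVm : Measurable V := (hψ.div hψ').ennreal_toReal
  have hofU : ∀ x, ENNReal.ofReal (U x) = u x := fun x => ENNReal.ofReal_toReal (hutop x)
  have hofV : ∀ y, ENNReal.ofReal (V y) = v y := fun y => ENNReal.ofReal_toReal (hvtop y)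
  set ρ : X × Y → ℝ := fun z => U z.1 * V z.2 with hρ
  have hρm : Measurable ρ := (hUm.comp measurable_fst).mul (hVm.comp measurable_snd)
  have hρpos : ∀ z, 0 < ρ z := fun z => mul_pos (hUpos z.1) (hVpos z.2)
  -- the withDensity relation
  have hπkey : π = π'.withDensity (fun z => ENNReal.ofReal (ρ z)) := by
    have hd : (fun z : X × Y => ENNReal.ofReal (ρ z)) = fun z => u z.1 * v z.2 := by
      funext z
      rw [hρ, ENNReal.ofReal_mul (hUpos z.1).le, hofU, hofV]
    have hf : Measurable fun z : X × Y => φ' z.1 * ψ' z.2 :=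
      (hφ'.comp measurable_fst).mul (hψ'.comp measurable_snd)
    have hg : Measurable fun z : X × Y => u z.1 * v z.2 :=
      ((hφ.div hφ').comp measurable_fst).mul ((hψ.div hψ').comp measurable_snd)
    rw [hd, hπ'R, ← withDensity_mul R hf hg, hπR]
    congr 1
    funext z
    have h2 : φ' z.1 * ψ' z.2 * (u z.1 * v z.2) = φ z.1 * ψ z.2 := by
      have h1 : φ' z.1 * ψ' z.2 * (u z.1 * v z.2) = (φ' z.1 * (u z.1)) * (ψ' z.2 * (v z.2)) := by
        ring
      rw [h1, hu, hv, ENNReal.mul_div_cancel (hφ'pos z.1).1.ne' (hφ'pos z.1).2,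
        ENNReal.mul_div_cancel (hψ'pos z.2).1.ne' (hψ'pos z.2).2]
    exact h2.symm
  -- the truncated sequence
  set G : ℕ → X × Y → ℝ :=
    fun n z => trunc n (Real.log (U z.1)) + trunc n (Real.log (V z.2)) with hG
  have hlog : ∀ z : X × Y, Real.log (ρ z) = Real.log (U z.1) + Real.log (V z.2) := fun z =>
    Real.log_mul (hUpos z.1).ne' (hVpos z.2).ne'
  have hGm : ∀ n, Measurable (G n) := fun n =>
    (((continuous_trunc n).measurable).comp
      (Real.measurable_log.comp (hUm.comp measurable_fst))).add
    (((continuous_trunc n).measurable).comp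
      (Real.measurable_log.comp (hVm.comp measurable_snd)))
  have hGb : ∀ n, ∃ C, ∀ z, |G n z| ≤ C := fun n =>
    ⟨(n : ℝ) + n, fun z => (abs_add_le _ _).trans
      (add_le_add (trunc_abs_le _ _ (Nat.cast_nonneg n)) (trunc_abs_le _ _ (Nat.cast_nonneg n)))⟩
  have hdom : ∀ n z, (0 ≤ Real.log (ρ z) → G n z ∈ Icc (0:ℝ) (Real.log (ρ z))) ∧
      (Real.log (ρ z) ≤ 0 → G n z ∈ Icc (Real.log (ρ z)) (0:ℝ)) := by
    intro n z
    rw [hlog z]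
    constructor
    · intro h
      exact ⟨trunc_add_nonneg _ _ _ h, trunc_add_le _ _ _ (Nat.cast_nonneg n) h⟩
    · intro h
      exact Set.mem_Icc.2 (trunc_add_nonpos _ _ _ (Nat.cast_nonneg n) h)
  have hconv : ∀ z, ∀ᶠ n in Filter.atTop, G n z = Real.log (ρ z) := by
    intro z
    filter_upwards [Filter.eventually_ge_atTop
      (⌈|Real.log (U z.1)|⌉₊ ⊔ ⌈|Real.log (V z.2)|⌉₊)] with n hn
    simp only [hG]
    rw [hlog z]
    have h1 : |Real.log (U z.1)| ≤ (n : ℝ) :=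
      (Nat.le_ceil _).trans (Nat.cast_le.2 ((le_sup_left).trans hn))
    have h2 : |Real.log (V z.2)| ≤ (n : ℝ) :=
      (Nat.le_ceil _).trans (Nat.cast_le.2 ((le_sup_right).trans hn))
    rw [trunc_eq_self _ _ h1, trunc_eq_self _ _ h2]
  have hint : ∀ n, ∫ z, G n z ∂π = ∫ z, G n z ∂π' := by
    intro n
    simp only [hG]
    have hA : Measurable (fun x => trunc n (Real.log (U x))) :=
      ((continuous_trunc n).measurable).comp (Real.measurable_log.comp hUm)
    have hB : Measurable (fun y => trunc n (Real.log (V y))) :=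
      ((continuous_trunc n).measurable).comp (Real.measurable_log.comp hVm)
    rw [integral_sum_marginals π _ _ hA hB n n
        (fun x => trunc_abs_le _ _ (Nat.cast_nonneg n))
        (fun y => trunc_abs_le _ _ (Nat.cast_nonneg n)),
      integral_sum_marginals π' _ _ hA hB n n
        (fun x => trunc_abs_le _ _ (Nat.cast_nonneg n))
        (fun y => trunc_abs_le _ _ (Nat.cast_nonneg n)),
      hπ₁, hπ₂, hπ'₁, hπ'₂]
  exact aux_unique π π' ρ hρm hρpos hπkey G hGm hGb hdom hconv hint
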